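/- arXiv:2205.02574 — 2 statements merged into one kernel-verified Lean document; each statement's English description precedes it below -/
import Mathlib

section
/- Let S = {000, 001, 010, 100, 101} be the set of length-3 binary words with no factor 11. Suppose u ∈ {0,1,2}*, w ∈ {0,1}*, and s ∈ S satisfy |u| = |w| and val_F(u) = val_F(w·s). Then for every digit a ∈ {0,1,2}, there exist a unique bit b ∈ {0,1} and a unique t ∈ S such that val_F(u·a) = val_F(w·b·t). -/
/-- Fibonacci sequence with F 0 = 1, F 1 = 2. -/
def F (n : ℕ) : ℕ := Nat.fib (n + 2)

/-- Fibonacci extended to integer indices ≥ -2, with F_{-2} = 0, F_{-1} = 1. -/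
def Fz (m : ℤ) : ℤ := ((m + 2).toNat.fib : ℤ)

/-- Fibonacci value of a word (most significant digit first):
`valF (w_{k-1} ⋯ w_0) = ∑ w_i F_i`. -/
def valF : List ℕ → ℕ
  | [] => 0
  | a :: t => a * F t.length + valF t

/-- Fibonacci's complement value:
`valFc (w_{k-1} ⋯ w_0) = ∑ w_i F_i − w_{k-1} F_k`. -/
def valFc (w : List ℕ) : ℤ :=
  (valF w : ℤ) - (w.headD 0 : ℤ) * (F w.length : ℤ)

/-- The five length-3 binary words with no factor 11. -/
def Sset : Set (List ℕ) :=
  {[0,0,0], [0,0,1], [0,1,0], [1,0,0], [1,0,1]}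

/-- pad a word with `k` trailing zeros (i.e. shift its value). -/
def pad (x : List ℕ) (k : ℕ) : List ℕ := x ++ List.replicate k 0

lemma pad_zero (x : List ℕ) : pad x 0 = x := by simp [pad]

lemma F_add_two (m : ℕ) : F (m + 2) = F (m + 1) + F m := by
  show Nat.fib (m + 4) = Nat.fib (m + 3) + Nat.fib (m + 2)
  rw [show m + 4 = (m + 2) + 2 from rfl, Nat.fib_add_two]
  rw [show m + 3 = (m + 2) + 1 from rfl]
  omega

lemma F0 : F 0 = 1 := rfl
lemma F1 : F 1 = 2 := rfl
lemma F3 : F 3 = 5 := rfl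
lemma F4 : F 4 = 8 := rfl

lemma valF_replicate (k : ℕ) : valF (List.replicate k 0) = 0 := by
  induction k with
  | zero => rfl
  | succ k ih => simp [List.replicate, valF, ih]

lemma valF_append (x y : List ℕ) : valF (x ++ y) = valF (pad x y.length) + valF y := by
  induction x with
  | nil => simp [pad, valF_replicate, valF]
  | cons c x' ih =>
    have h : pad (c :: x') y.length = c :: pad x' y.length := rfl
    rw [h]
    show c * F (x' ++ y).length + valF (x' ++ y)
        = (c * F (pad x' y.length).length + valF (pad x' y.length)) + valF y
    rw [ih]
    have hl : (x' ++ y).length = (pad x' y.length).length := by simp [pad]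
    rw [hl]; ring

lemma valF_pad_rec (x : List ℕ) (k : ℕ) :
    valF (pad x (k + 2)) = valF (pad x (k + 1)) + valF (pad x k) := by
  induction x with
  | nil => simp [pad, valF_replicate]
  | cons c x' ih =>
    show c * F (pad x' (k+2)).length + valF (pad x' (k+2))
        = (c * F (pad x' (k+1)).length + valF (pad x' (k+1)))
          + (c * F (pad x' k).length + valF (pad x' k))
    rw [ih]
    have h2 : (pad x' (k + 2)).length = (pad x' k).length + 2 := by simp [pad]; omega
    have h1 : (pad x' (k + 1)).length = (pad x' k).length + 1 := by simp [pad]; omega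
    rw [h2, h1, F_add_two]
    ring

lemma valF_concat_pad (x : List ℕ) (b k : ℕ) :
    valF (pad (x ++ [b]) k) = valF (pad x (k + 1)) + b * F k := by
  have h1 : pad (x ++ [b]) k = x ++ (b :: List.replicate k 0) := by simp [pad]
  rw [h1, valF_append]
  have h2 : (b :: List.replicate k 0).length = k + 1 := by simp
  rw [h2]
  simp [valF, valF_replicate]

lemma valF_concat (x : List ℕ) (b : ℕ) : valF (x ++ [b]) = valF (pad x 1) + b := by
  have h := valF_concat_pad x b 0
  rw [pad_zero] at h
  simpa [F0] using h

noncomputable def gr : ℝ := (1 + Real.sqrt 5) / 2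

lemma hs2' : Real.sqrt 5 ^ 2 = 5 := Real.sq_sqrt (by norm_num)
lemma hs0' : (0:ℝ) ≤ Real.sqrt 5 := Real.sqrt_nonneg 5

lemma gr_sq : gr ^ 2 = gr + 1 := by
  unfold gr; linear_combination hs2' / 4

lemma gr_lb : (8:ℝ)/5 < gr := by
  unfold gr
  nlinarith [hs2', hs0']

lemma gr_ub : gr < (13:ℝ)/8 := by
  unfold gr
  nlinarith [hs2', hs0', sq_nonneg (Real.sqrt 5 - 9/4)]

lemma inv_lemma : ∀ (n : ℕ) (u w : List ℕ), u.length = n → w.length = n →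
    (∀ x ∈ u, x ≤ 2) → (∀ x ∈ w, x ≤ 1) →
    5*gr - 9 ≤ ((valF (pad u 1) : ℝ) - (valF (pad w 4) : ℝ))
        - gr * ((valF u : ℝ) - (valF (pad w 3) : ℝ)) ∧
    ((valF (pad u 1) : ℝ) - (valF (pad w 4) : ℝ))
        - gr * ((valF u : ℝ) - (valF (pad w 3) : ℝ)) ≤ 4*gr - 5 := by
  intro n
  induction n with
  | zero =>
    intro u w hul hwl _ _
    rw [List.length_eq_zero_iff] at hul hwl
    subst hul; subst hwl
    simp only [pad, List.nil_append, valF_replicate, valF]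
    norm_num
    constructor <;> nlinarith [hs2', hs0', gr_lb, gr_ub, gr_sq]
  | succ n ih =>
    intro u w hul hwl hu hw
    rcases u.eq_nil_or_concat with rfl | ⟨u', a, rfl⟩
    · simp at hul
    rcases w.eq_nil_or_concat with rfl | ⟨w', d, rfl⟩
    · simp at hwl
    simp only [List.concat_eq_append] at hul hwl hu hw ⊢
    have hul' : u'.length = n := by simp at hul; omega
    have hwl' : w'.length = n := by simp at hwl; omega
    have ha : a ≤ 2 := hu a (by simp)
    have hd : d ≤ 1 := hw d (by simp)
    have hu' : ∀ x ∈ u', x ≤ 2 := fun x hx => hu x (by simp [hx])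
    have hw' : ∀ x ∈ w', x ≤ 1 := fun x hx => hw x (by simp [hx])
    obtain ⟨ih1, ih2⟩ := ih u' w' hul' hwl' hu' hw'
    have r1 : valF (u' ++ [a]) = valF (pad u' 1) + a := valF_concat u' a
    have r2 : valF (pad (u' ++ [a]) 1) = valF (pad u' 1) + valF u' + a * 2 := by
      rw [valF_concat_pad u' a 1, valF_pad_rec u' 0, pad_zero, F1]
    have r3 : valF (pad (w' ++ [d]) 3) = valF (pad w' 4) + d * 5 := by
      rw [valF_concat_pad w' d 3, F3]
    have r4 : valF (pad (w' ++ [d]) 4) = valF (pad w' 4) + valF (pad w' 3) + d * 8 := by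
      rw [valF_concat_pad w' d 4, valF_pad_rec w' 3, F4]
    rw [r1, r2, r3, r4]
    push_cast
    set A := (valF (pad u' 1) : ℝ) with hA
    set B := (valF u' : ℝ) with hB
    set C := (valF (pad w' 4) : ℝ) with hC
    set E := (valF (pad w' 3) : ℝ) with hE
    have ha' : (a:ℝ) ≤ 2 := by exact_mod_cast ha
    have hd' : (d:ℝ) ≤ 1 := by exact_mod_cast hd
    have ha0 : (0:ℝ) ≤ a := by positivity
    have hd0 : (0:ℝ) ≤ d := by positivity
    have hz : gr ^ 2 - gr - 1 = 0 := by linarith [gr_sq]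
    have hmul : (gr ^ 2 - gr - 1) * (B - E) = 0 := by rw [hz]; ring
    have hg1 : (0:ℝ) ≤ gr - 1 := by linarith [gr_lb]
    have hg2 : (0:ℝ) ≤ 2 - gr := by linarith [gr_ub]
    have hg3 : (0:ℝ) ≤ 5*gr - 8 := by linarith [gr_lb]
    constructor
    · have P1 : (0:ℝ) ≤ (gr - 1) * ((4*gr - 5) - ((A - C) - gr * (B - E))) :=
        mul_nonneg hg1 (by linarith)
      have P2 : (0:ℝ) ≤ (2 - gr) * a := mul_nonneg hg2 ha0
      have P3 : (0:ℝ) ≤ (5*gr - 8) * d := mul_nonneg hg3 hd0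
      nlinarith [P1, P2, P3, hmul, gr_sq]
    · have Q1 : (0:ℝ) ≤ (gr - 1) * (((A - C) - gr * (B - E)) - (5*gr - 9)) :=
        mul_nonneg hg1 (by linarith)
      have Q2 : (0:ℝ) ≤ (2 - gr) * (2 - a) := mul_nonneg hg2 (by linarith)
      have Q3 : (0:ℝ) ≤ (5*gr - 8) * (1 - d) := mul_nonneg hg3 (by linarith)
      nlinarith [Q1, Q2, Q3, hmul, gr_sq, gr_ub]

lemma Xbounds (u w : List ℕ) (hu : ∀ x ∈ u, x ≤ 2) (hw : ∀ x ∈ w, x ≤ 1)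
    (hlen : u.length = w.length) (v : ℕ) (hv : v ≤ 4)
    (hval : valF u = valF (pad w 3) + v) :
    valF (pad w 4) ≤ valF (pad u 1) ∧ valF (pad u 1) ≤ valF (pad w 4) + 7 := by
  obtain ⟨h1, h2⟩ := inv_lemma w.length u w hlen rfl hu hw
  rw [hval] at h1 h2
  push_cast at h1 h2
  have hv' : (v:ℝ) ≤ 4 := by exact_mod_cast hv
  have hv0 : (0:ℝ) ≤ v := by positivity
  have hg0 : (0:ℝ) ≤ gr := by linarith [gr_lb]
  have hm1 : (0:ℝ) ≤ gr * v := mul_nonneg hg0 hv0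
  have hm2 : gr * v ≤ gr * 4 := by nlinarith [gr_lb]
  constructor
  · by_contra hc
    push_neg at hc
    have hc' : (valF (pad u 1) : ℝ) + 1 ≤ (valF (pad w 4) : ℝ) := by exact_mod_cast hc
    nlinarith [gr_lb, h1]
  · by_contra hc
    push_neg at hc
    have hc' : (valF (pad w 4) : ℝ) + 8 ≤ (valF (pad u 1) : ℝ) := by exact_mod_cast hc
    nlinarith [gr_ub, h2]

lemma v000 : valF [0,0,0] = 0 := by decide
lemma v001 : valF [0,0,1] = 1 := by decide
lemma v010 : valF [0,1,0] = 2 := by decide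
lemma v100 : valF [1,0,0] = 3 := by decide
lemma v101 : valF [1,0,1] = 4 := by decide

lemma exu (N : ℕ) (hN : N ≤ 9) :
    ∃! bt : ℕ × List ℕ, (bt.1 ≤ 1 ∧ bt.2 ∈ Sset) ∧ N = bt.1 * 5 + valF bt.2 := by
  have mem : ∀ t : List ℕ, t ∈ Sset ↔
      t = [0,0,0] ∨ t = [0,0,1] ∨ t = [0,1,0] ∨ t = [1,0,0] ∨ t = [1,0,1] := by
    intro t
    simp [Sset]
  have key : ∀ (b₀ : ℕ) (t₀ : List ℕ), b₀ ≤ 1 → t₀ ∈ Sset → N = b₀ * 5 + valF t₀ →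
      ∃! bt : ℕ × List ℕ, (bt.1 ≤ 1 ∧ bt.2 ∈ Sset) ∧ N = bt.1 * 5 + valF bt.2 := by
    intro b₀ t₀ hb₀ ht₀ heq
    refine ⟨⟨b₀, t₀⟩, ⟨⟨hb₀, ht₀⟩, heq⟩, ?_⟩
    rintro ⟨b, t⟩ ⟨⟨hb, ht⟩, he⟩
    rw [mem] at ht ht₀
    simp only [Prod.mk.injEq]
    rcases ht with rfl | rfl | rfl | rfl | rfl <;>
      rcases ht₀ with rfl | rfl | rfl | rfl | rfl <;>
      simp only [v000, v001, v010, v100, v101] at he heq <;>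
      refine ⟨by omega, by first | rfl | (exfalso; omega)⟩
  interval_cases N
  · exact key 0 [0,0,0] (by norm_num) (by simp [Sset]) (by rw [v000])
  · exact key 0 [0,0,1] (by norm_num) (by simp [Sset]) (by rw [v001])
  · exact key 0 [0,1,0] (by norm_num) (by simp [Sset]) (by rw [v010])
  · exact key 0 [1,0,0] (by norm_num) (by simp [Sset]) (by rw [v100])
  · exact key 0 [1,0,1] (by norm_num) (by simp [Sset]) (by rw [v101])
  · exact key 1 [0,0,0] (by norm_num) (by simp [Sset]) (by rw [v000])
  · exact key 1 [0,0,1] (by norm_num) (by simp [Sset]) (by rw [v001])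
  · exact key 1 [0,1,0] (by norm_num) (by simp [Sset]) (by rw [v010])
  · exact key 1 [1,0,0] (by norm_num) (by simp [Sset]) (by rw [v100])
  · exact key 1 [1,0,1] (by norm_num) (by simp [Sset]) (by rw [v101])


theorem tree_structure (u w : List ℕ) (s : List ℕ)
    (hu : ∀ x ∈ u, x ≤ 2) (hw : ∀ x ∈ w, x ≤ 1) (hs : s ∈ Sset)
    (hlen : u.length = w.length) (hval : valF u = valF (w ++ s)) :
    ∀ a : ℕ, a ≤ 2 →
      ∃! bt : ℕ × List ℕ, (bt.1 ≤ 1 ∧ bt.2 ∈ Sset) ∧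
        valF (u ++ [a]) = valF (w ++ bt.1 :: bt.2) := by
  intro a ha
  have hsplit : ∃ v, v ≤ 4 ∧ valF u = valF (pad w 3) + v := by
    simp only [Sset, Set.mem_insert_iff, Set.mem_singleton_iff] at hs
    rcases hs with rfl | rfl | rfl | rfl | rfl
    · exact ⟨0, by norm_num, by rw [hval, valF_append w [0,0,0]]; simp [v000]⟩
    · exact ⟨1, by norm_num, by rw [hval, valF_append w [0,0,1]]; simp [v001]⟩
    · exact ⟨2, by norm_num, by rw [hval, valF_append w [0,1,0]]; simp [v010]⟩
    · exact ⟨3, by norm_num, by rw [hval, valF_append w [1,0,0]]; simp [v100]⟩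
    · exact ⟨4, by norm_num, by rw [hval, valF_append w [1,0,1]]; simp [v101]⟩
  obtain ⟨v, hv4, hveq⟩ := hsplit
  obtain ⟨hX1, hX2⟩ := Xbounds u w hu hw hlen v hv4 hveq
  have hm : valF (pad u 1) = valF (pad w 4) + (valF (pad u 1) - valF (pad w 4)) := by omega
  set m := valF (pad u 1) - valF (pad w 4) with hmdef
  have hm7 : m ≤ 7 := by omega
  have hu1 : valF (u ++ [a]) = valF (pad w 4) + (m + a) := by
    rw [valF_concat u a]; omega
  have hw1 : ∀ (b : ℕ) (t : List ℕ), t ∈ Sset →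
      valF (w ++ b :: t) = valF (pad w 4) + (b * 5 + valF t) := by
    intro b t ht
    simp only [Sset, Set.mem_insert_iff, Set.mem_singleton_iff] at ht
    have h3 : t.length = 3 := by rcases ht with rfl | rfl | rfl | rfl | rfl <;> rfl
    rw [valF_append w (b :: t)]
    have h4 : (b :: t).length = 4 := by simp [h3]
    rw [h4]
    have h5 : valF (b :: t) = b * F t.length + valF t := rfl
    rw [h5, h3, F3]
  have base := exu (m + a) (by omega)
  refine (existsUnique_congr ?_).mpr base
  rintro ⟨b, t⟩
  dsimp only
  constructor
  · rintro ⟨⟨hb, ht⟩, he⟩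
    refine ⟨⟨hb, ht⟩, ?_⟩
    rw [hu1, hw1 b t ht] at he
    omega
  · rintro ⟨⟨hb, ht⟩, he⟩
    refine ⟨⟨hb, ht⟩, ?_⟩
    rw [hu1, hw1 b t ht]
    omega
end

section
/- Define a total order ≺ on binary words: u ≺ v iff (u starts with 1 and v starts with 0), or (both start with 0 and u <_rad v in radix order), or (both start with 1 and u <_rev v, where <_rev compares by longer length first, then lexicographically). Then val_Fc is an increasing bijection from (D, ≺) to (ℤ, <), where D = Σ(ΣΣ)* \ (Σ*11Σ* ∪ 000Σ* ∪ 101Σ*). -/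
/-- The domain D of the Fibonacci's complement numeration system. -/
def inD (w : List ℕ) : Prop :=
  (∀ x ∈ w, x ≤ 1) ∧ Odd w.length ∧ ¬ [1, 1] <:+: w ∧
    ¬ [0, 0, 0] <+: w ∧ ¬ [1, 0, 1] <+: w

/-- Radix order: shorter words first, ties broken lexicographically. -/
def radLt (u v : List ℕ) : Prop :=
  u.length < v.length ∨ (u.length = v.length ∧ List.Lex (· < ·) u v)

/-- Reverse-radix order: longer words first, ties broken lexicographically. -/
def revLt (u v : List ℕ) : Prop :=
  v.length < u.length ∨ (u.length = v.length ∧ List.Lex (· < ·) u v)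

/-- The total order ≺. -/
def precLt (u v : List ℕ) : Prop :=
  (u.headD 0 = 1 ∧ v.headD 0 = 0) ∨
  (u.headD 0 = 0 ∧ v.headD 0 = 0 ∧ radLt u v) ∨
  (u.headD 0 = 1 ∧ v.headD 0 = 1 ∧ revLt u v)




/-- Zeckendorf-admissible words. -/
def Zw (w : List ℕ) : Prop := (∀ x ∈ w, x ≤ 1) ∧ ¬ [1,1] <:+: w

lemma Zw_tail {a : ℕ} {t : List ℕ} (h : Zw (a::t)) : Zw t :=
  ⟨fun x hx => h.1 x (List.mem_cons_of_mem a hx), fun hi => h.2 (List.infix_cons hi)⟩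

lemma prefix_head {a : ℕ} {l w : List ℕ} (h : (a::l) <+: w) : w.headD 0 = a := by
  obtain ⟨t, rfl⟩ := h; rfl

lemma F_fib (n : ℕ) : F n = Nat.fib (n + 2) := rfl

theorem valF_lt : ∀ w : List ℕ, Zw w → valF w < Nat.fib (w.length + 2)
  | [], _ => by simp [valF]
  | 0 :: t, h => by
      have h1 := valF_lt t (Zw_tail h)
      have h2 : Nat.fib (t.length+2) ≤ Nat.fib (t.length + 1 + 2) := Nat.fib_mono (by omega)
      simpa [valF, F_fib] using lt_of_lt_of_le h1 h2
  | [1], _ => by decide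
  | 1 :: 0 :: s, h => by
      have h1 := valF_lt s (Zw_tail (Zw_tail h))
      have h2 : Nat.fib (s.length + 1 + 1 + 2) = Nat.fib (s.length + 2) + Nat.fib (s.length + 1 + 2) :=
        Nat.fib_add_two
      simp only [valF, F_fib, List.length_cons]
      omega
  | 1 :: 1 :: s, h => absurd (List.IsPrefix.isInfix ⟨s, rfl⟩) h.2
  | 1 :: (n+2) :: s, h => absurd (h.1 (n+2) (by simp)) (by omega)
  | (n+2) :: t, h => absurd (h.1 (n+2) (by simp)) (by omega)

theorem valF_lt_head0 {w : List ℕ} (h : Zw w) (h0 : w.headD 0 = 0) :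
    valF w < Nat.fib (w.length + 1) := by
  match w, h0 with
  | [], _ => simp [valF]
  | a :: t, h0 =>
    simp only [List.headD_cons] at h0; subst h0
    have h1 := valF_lt t (Zw_tail h)
    simpa [valF, List.length_cons] using h1

theorem valF_lex : ∀ {u v : List ℕ}, List.Lex (· < ·) u v → Zw u → Zw v →
    u.length = v.length → valF u < valF v := by
  intro u v h
  induction h with
  | nil => intro _ _ hlen; simp at hlen
  | @rel a s b t hab =>
    intro hu hv hlen
    have ha : a ≤ 1 := hu.1 a (by simp)
    have hb : b ≤ 1 := hv.1 b (by simp)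
    have ha0 : a = 0 := by omega
    have hb1 : b = 1 := by omega
    subst ha0 hb1
    have h1 : valF s < Nat.fib (s.length + 2) := valF_lt s (Zw_tail hu)
    have hlen' : s.length = t.length := by simpa using hlen
    rw [hlen'] at h1
    simp only [valF, F_fib]
    omega
  | @cons a s t _ ih =>
    intro hu hv hlen
    have hlen' : s.length = t.length := by simpa using hlen
    have h1 := ih (Zw_tail hu) (Zw_tail hv) hlen'
    simp only [valF, hlen']
    omega

theorem zeck : ∀ k : ℕ, ∀ n < Nat.fib (k + 2), ∃ w : List ℕ, w.length = k ∧ Zw w ∧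
    valF w = n ∧ (n < Nat.fib (k+1) → w.headD 0 = 0) := by
  intro k
  induction k with
  | zero =>
    intro n hn
    interval_cases n
    exact ⟨[], rfl, ⟨by simp, fun h => by simpa using h.length_le⟩, rfl, fun _ => rfl⟩
  | succ k ih =>
    intro n hn
    by_cases h : n < Nat.fib (k + 2)
    · obtain ⟨w, hl, hZ, hval, _⟩ := ih n h
      refine ⟨0::w, by simp [hl], ⟨?_, ?_⟩, by simp [valF, hval], fun _ => rfl⟩
      · intro x hx; rcases List.mem_cons.mp hx with rfl | hx
        · omega
        · exact hZ.1 x hx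
      · rw [List.infix_cons_iff]
        rintro (hp | hi)
        · have := prefix_head hp; simp at this
        · exact hZ.2 hi
    · push_neg at h
      match k with
      | 0 =>
        have e2 : Nat.fib 2 = 1 := by decide
        have e3 : Nat.fib 3 = 2 := by decide
        have h' : Nat.fib 2 ≤ n := h
        have hn' : n < Nat.fib 3 := hn
        have hn1 : n = 1 := by omega
        subst hn1
        refine ⟨[1], rfl, ⟨by simp, fun h => by simpa using h.length_le⟩, by decide,
          fun hc => by simp at hc⟩
      | k+1 =>
        have hn' : n < Nat.fib (k + 4) := hn
        have h' : Nat.fib (k + 3) ≤ n := h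
        have hrec : Nat.fib (k + 4) = Nat.fib (k + 2) + Nat.fib (k + 3) := Nat.fib_add_two
        have hm : n - Nat.fib (k + 3) < Nat.fib (k + 2) := by omega
        have hm' : n - Nat.fib (k + 3) < Nat.fib (k + 3) :=
          lt_of_lt_of_le hm (Nat.fib_mono (by omega))
        obtain ⟨w, hl, hZ, hval, hhead⟩ := ih _ hm'
        have h0 : w.headD 0 = 0 := hhead hm
        have hwne : w ≠ [] := by intro e; rw [e] at hl; simp at hl
        refine ⟨1::w, by simp [hl], ⟨?_, ?_⟩, ?_,
          fun hc => absurd (show n < Nat.fib (k+3) from hc) (by omega)⟩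
        · intro x hx; rcases List.mem_cons.mp hx with rfl | hx
          · omega
          · exact hZ.1 x hx
        · rw [List.infix_cons_iff]
          rintro (hp | hi)
          · rcases List.cons_prefix_cons.mp hp with ⟨-, hp1⟩
            have := prefix_head hp1; omega
          · exact hZ.2 hi
        · simp only [valF, hl, hval, F_fib]
          have e : Nat.fib (k+1+2) = Nat.fib (k+3) := rfl
          omega

lemma lt_F_self : ∀ n : ℕ, n < Nat.fib (n + 2) := by
  intro n
  induction n with
  | zero => simp
  | succ n ih =>
    have h1 : Nat.fib (n + 3) = Nat.fib (n + 1) + Nat.fib (n + 2) := Nat.fib_add_two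
    have h2 : 0 < Nat.fib (n + 1) := Nat.fib_pos.mpr (by omega)
    have e : Nat.fib (n+1+2) = Nat.fib (n+3) := rfl
    omega

lemma exists_interval {n : ℕ} (hn : 1 ≤ n) :
    ∃ j, Nat.fib (j + 2) ≤ n ∧ n < Nat.fib (j + 3) := by
  have hex : ∃ j, n < Nat.fib (j + 2) := ⟨n, lt_F_self n⟩
  have hj0 : n < Nat.fib (Nat.find hex + 2) := Nat.find_spec hex
  have hne : Nat.find hex ≠ 0 := by
    intro h; rw [h] at hj0; simp at hj0; omega
  obtain ⟨j, hj⟩ := Nat.exists_eq_succ_of_ne_zero hne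
  have hmin := Nat.find_min hex (m := j) (by omega)
  push_neg at hmin
  refine ⟨j, hmin, ?_⟩
  rw [hj] at hj0
  exact hj0







lemma inD_Zw {w : List ℕ} (h : inD w) : Zw w := ⟨h.1, h.2.2.1⟩

lemma surj_nonneg (n : ℕ) : ∃ w, inD w ∧ valFc w = (n : ℤ) := by
  rcases Nat.eq_zero_or_pos n with rfl | hn
  · refine ⟨[0], ⟨?_, ?_, ?_, ?_, ?_⟩, ?_⟩
    · intro x hx; simp at hx; omega
    · exact ⟨0, rfl⟩
    · intro h; simpa using h.length_le
    · intro h; simpa using h.length_le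
    · intro h; simpa using h.length_le
    · simp [valFc, valF, F]
  · obtain ⟨j, hj1, hj2⟩ := exists_interval hn
    have hn' : n < Nat.fib (j + 1 + 2) := hj2
    obtain ⟨w, hl, hZ, hval, _⟩ := zeck (j+1) n hn'
    -- head of w is 1
    have hhead : w.headD 0 = 1 := by
      by_contra hne
      have h01 : w.headD 0 = 0 ∨ w.headD 0 = 1 := by
        cases w with
        | nil => left; rfl
        | cons a t => have := hZ.1 a (by simp); simp; omega
      have h0 : w.headD 0 = 0 := by tauto
      have := valF_lt_head0 hZ h0
      rw [hl, hval] at this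
      have e : Nat.fib (j + 1 + 1) = Nat.fib (j + 2) := rfl
      omega
    rcases Nat.even_or_odd j with he | ho
    · -- |w| = j+1 odd, pad two zeros
      refine ⟨0::0::w, ⟨?_, ?_, ?_, ?_, ?_⟩, ?_⟩
      · intro x hx; simp only [List.mem_cons] at hx
        rcases hx with rfl | rfl | hx
        · omega
        · omega
        · exact hZ.1 x hx
      · obtain ⟨c, hc⟩ := he; exact ⟨c + 1, by simp [hl, hc]; omega⟩
      · rw [List.infix_cons_iff, List.infix_cons_iff]
        rintro (hp | hp | hi)
        · have := prefix_head hp; simp at this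
        · have := prefix_head hp; simp at this
        · exact hZ.2 hi
      · intro hp
        obtain ⟨-, hp⟩ := List.cons_prefix_cons.mp hp
        obtain ⟨-, hp⟩ := List.cons_prefix_cons.mp hp
        have := prefix_head hp; omega
      · intro hp; have := prefix_head hp; simp at this
      · simp [valFc, valF, hval]
    · -- |w| = j+1 even, pad one zero
      refine ⟨0::w, ⟨?_, ?_, ?_, ?_, ?_⟩, ?_⟩
      · intro x hx; simp only [List.mem_cons] at hx
        rcases hx with rfl | hx
        · omega
        · exact hZ.1 x hx
      · obtain ⟨c, hc⟩ := ho; exact ⟨c + 1, by simp [hl, hc]; omega⟩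
      · rw [List.infix_cons_iff]
        rintro (hp | hi)
        · have := prefix_head hp; simp at this
        · exact hZ.2 hi
      · intro hp
        obtain ⟨-, hp⟩ := List.cons_prefix_cons.mp hp
        have hp2 : w.headD 0 = 0 := by
          cases w with
          | nil => rfl
          | cons a t => obtain ⟨rfl, -⟩ := List.cons_prefix_cons.mp hp; rfl
        omega
      · intro hp; have := prefix_head hp; simp at this
      · simp [valFc, valF, hval]

lemma surj_neg (m : ℕ) (hm : 1 ≤ m) : ∃ w, inD w ∧ valFc w = -(m : ℤ) := by
  rcases eq_or_lt_of_le hm with h1 | hm2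
  · refine ⟨[1], ⟨?_, ⟨0, rfl⟩, ?_, ?_, ?_⟩, ?_⟩
    · intro x hx; simp at hx; omega
    · intro h; simpa using h.length_le
    · intro h; simpa using h.length_le
    · intro h; simpa using h.length_le
    · rw [← h1]; decide
  · -- m ≥ 2
    have hex : ∃ t, m ≤ Nat.fib (2*t+3) := by
      refine ⟨m, le_trans (le_of_lt (lt_F_self m)) (Nat.fib_mono (by omega))⟩
    have hub : m ≤ Nat.fib (2 * Nat.find hex + 3) := Nat.find_spec hex
    have hlb : Nat.fib (2 * Nat.find hex + 1) < m := by
      by_cases ht : Nat.find hex = 0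
      · rw [ht]
        have : Nat.fib (2*0+1) = 1 := by decide
        omega
      · have hmin := Nat.find_min hex (m := Nat.find hex - 1) (by omega)
        push_neg at hmin
        have e : 2 * (Nat.find hex - 1) + 3 = 2 * Nat.find hex + 1 := by omega
        rwa [e] at hmin
    set t0 := Nat.find hex with ht0
    have hrec := Nat.fib_add_two (n := 2*t0+1)
    have e1 : Nat.fib (2*t0+1+2) = Nat.fib (2*t0+3) := rfl
    have e2 : Nat.fib (2*t0+1+1) = Nat.fib (2*t0+2) := rfl
    rw [e1, e2] at hrec
    have hn' : Nat.fib (2*t0+3) - m < Nat.fib (2*t0 + 2) := by omega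
    obtain ⟨s, hls, hZ, hval, -⟩ := zeck (2*t0) _ hn'
    refine ⟨1::0::0::s, ⟨?_, ?_, ?_, ?_, ?_⟩, ?_⟩
    · intro x hx; simp only [List.mem_cons] at hx
      rcases hx with rfl | rfl | rfl | hx
      · omega
      · omega
      · omega
      · exact hZ.1 x hx
    · refine ⟨t0 + 1, by simp [hls]; omega⟩
    · rw [List.infix_cons_iff, List.infix_cons_iff, List.infix_cons_iff]
      rintro (hp | hp | hp | hi)
      · obtain ⟨-, hp⟩ := List.cons_prefix_cons.mp hp
        have := prefix_head hp; simp at this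
      · have := prefix_head hp; simp at this
      · have := prefix_head hp; simp at this
      · exact hZ.2 hi
    · intro hp; have := prefix_head hp; simp at this
    · intro hp
      obtain ⟨-, hp⟩ := List.cons_prefix_cons.mp hp
      obtain ⟨-, hp⟩ := List.cons_prefix_cons.mp hp
      have := prefix_head hp; simp at this
    · simp only [valFc, valF, List.length_cons, List.headD_cons, hls, hval, F_fib]
      have e3 : Nat.fib (2*t0+2+2) = Nat.fib (2*t0+4) := rfl
      have e4 : Nat.fib (2*t0+1+2) = Nat.fib (2*t0+3) := rfl
      have e5 : Nat.fib (2*t0+1+1+2) = Nat.fib (2*t0+4) := rfl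
      have e6 : Nat.fib (2*t0+1+1+1+2) = Nat.fib (2*t0+5) := rfl
      have hrec2 := Nat.fib_add_two (n := 2*t0+3)
      have e7 : Nat.fib (2*t0+3+2) = Nat.fib (2*t0+5) := rfl
      have e8 : Nat.fib (2*t0+3+1) = Nat.fib (2*t0+4) := rfl
      rw [e7, e8] at hrec2
      push_cast
      omega

lemma surj_all (z : ℤ) : ∃ w, inD w ∧ valFc w = z := by
  rcases le_or_gt 0 z with hz | hz
  · obtain ⟨w, h1, h2⟩ := surj_nonneg z.toNat
    exact ⟨w, h1, by rw [h2]; omega⟩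
  · obtain ⟨w, h1, h2⟩ := surj_neg z.natAbs (by omega)
    exact ⟨w, h1, by rw [h2]; omega⟩

lemma inD_ne_nil {w : List ℕ} (h : inD w) : w ≠ [] := by
  intro e; rw [e] at h
  simpa using h.2.1

lemma head01 {w : List ℕ} (h : inD w) : w.headD 0 = 0 ∨ w.headD 0 = 1 := by
  cases w with
  | nil => exact Or.inl rfl
  | cons a t => have := h.1 a (by simp); simp; omega

lemma valFc_head0 {w : List ℕ} (h0 : w.headD 0 = 0) : valFc w = (valF w : ℤ) := by
  unfold valFc; rw [h0]; push_cast; ring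

lemma valFc_head1 (t : List ℕ) :
    valFc (1::t) = (valF t : ℤ) - (Nat.fib (t.length + 1) : ℤ) := by
  have hrec := Nat.fib_add_two (n := t.length + 1)
  simp only [valFc, valF, List.length_cons, List.headD_cons, F_fib]
  have e1 : Nat.fib (t.length+1+2) = Nat.fib (t.length+3) := rfl
  have e2 : Nat.fib (t.length+1+1) = Nat.fib (t.length+2) := rfl
  rw [e1, e2] at hrec
  push_cast
  omega

lemma cons1_of_head1 {w : List ℕ} (h : inD w) (h1 : w.headD 0 = 1) :
    ∃ t, w = 1::t ∧ t.headD 0 = 0 := by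
  cases w with
  | nil => simp at h1
  | cons a t =>
    simp only [List.headD_cons] at h1; subst h1
    refine ⟨t, rfl, ?_⟩
    cases t with
    | nil => rfl
    | cons b s =>
      have hb : b ≤ 1 := h.1 b (by simp)
      rcases Nat.lt_or_ge b 1 with hb0 | hb1
      · simp; omega
      · exfalso
        have hb1' : b = 1 := by omega
        subst hb1'
        exact h.2.2.1 (List.IsPrefix.isInfix ⟨s, rfl⟩)

lemma valFc_neg {u : List ℕ} (hu : inD u) (h1 : u.headD 0 = 1) : valFc u < 0 := by
  obtain ⟨t, rfl, ht0⟩ := cons1_of_head1 hu h1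
  rw [valFc_head1]
  have := valF_lt_head0 (Zw_tail (inD_Zw hu)) ht0
  omega

lemma valFc_head1_lb {u : List ℕ} (hu : inD u) (h1 : u.headD 0 = 1) :
    -(Nat.fib u.length : ℤ) ≤ valFc u := by
  obtain ⟨t, rfl, -⟩ := cons1_of_head1 hu h1
  rw [valFc_head1]
  simp only [List.length_cons]
  omega

lemma valF_lb_head0 {v : List ℕ} (hv : inD v) (h0 : v.headD 0 = 0)
    (h3 : 3 ≤ v.length) : Nat.fib (v.length - 1) ≤ valF v := by
  match v, h0, h3 with
  | 0 :: b :: c :: r, _, _ =>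
    have hb : b ≤ 1 := hv.1 b (by simp)
    have hc : c ≤ 1 := hv.1 c (by simp)
    have hnotboth : ¬ (b = 0 ∧ c = 0) := by
      rintro ⟨rfl, rfl⟩
      exact hv.2.2.2.1 ⟨r, rfl⟩
    simp only [valF, List.length_cons, F_fib]
    rcases Nat.lt_or_ge b 1 with hb0 | hb1
    · have hb' : b = 0 := by omega
      have hc' : c = 1 := by omega
      subst hb' hc'
      have e : r.length + 1 + 1 + 1 - 1 = r.length + 2 := by omega
      rw [e]
      omega
    · have hb' : b = 1 := by omega
      subst hb'
      have hmono : Nat.fib (r.length + 2) ≤ Nat.fib (r.length + 1 + 2) :=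
        Nat.fib_mono (by omega)
      have e : r.length + 1 + 1 + 1 - 1 = r.length + 2 := by omega
      rw [e]
      omega

lemma valFc_head1_ub {u : List ℕ} (hu : inD u) (h1 : u.headD 0 = 1)
    (h3 : 3 ≤ u.length) : valFc u ≤ -(Nat.fib (u.length - 2) : ℤ) - 1 := by
  obtain ⟨t, rfl, ht0⟩ := cons1_of_head1 hu h1
  match t, ht0, h3 with
  | 0 :: c :: r, _, _ =>
    have hc : c ≤ 1 := hu.1 c (by simp)
    have hc0 : c = 0 := by
      rcases Nat.lt_or_ge c 1 with h | h
      · omega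
      · exfalso
        have : c = 1 := by omega
        subst this
        exact hu.2.2.2.2 ⟨r, rfl⟩
    subst hc0
    rw [valFc_head1]
    have hr := valF_lt r (Zw_tail (Zw_tail (Zw_tail (inD_Zw hu))))
    simp only [valF, List.length_cons, F_fib]
    have e : r.length + 1 + 1 + 1 - 2 = r.length + 1 := by omega
    rw [e]
    have eg : Nat.fib (r.length+1+1+1) = Nat.fib (r.length+3) := rfl
    rw [eg]
    have hrec := Nat.fib_add_two (n := r.length + 1)
    have e1 : Nat.fib (r.length+1+2) = Nat.fib (r.length+3) := rfl
    have e2 : Nat.fib (r.length+1+1) = Nat.fib (r.length+2) := rfl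
    rw [e1, e2] at hrec
    omega

lemma lex_total : ∀ (u v : List ℕ), u.length = v.length → u ≠ v →
    List.Lex (· < ·) u v ∨ List.Lex (· < ·) v u := by
  intro u
  induction u with
  | nil =>
    intro v h hne
    cases v with
    | nil => exact absurd rfl hne
    | cons b t => simp at h
  | cons a s ih =>
    intro v h hne
    cases v with
    | nil => simp at h
    | cons b t =>
      rcases lt_trichotomy a b with h1 | h1 | h1
      · exact Or.inl (List.Lex.rel h1)
      · subst h1
        rcases ih t (by simpa using h) (fun e => hne (by rw [e])) with h2 | h2
        · exact Or.inl (List.Lex.cons h2)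
        · exact Or.inr (List.Lex.cons h2)
      · exact Or.inr (List.Lex.rel h1)

lemma prec_total {u v : List ℕ} (hu : inD u) (hv : inD v) (hne : u ≠ v) :
    precLt u v ∨ precLt v u := by
  have hlt : ∀ x y : List ℕ, inD x → inD y → x ≠ y →
      x.headD 0 = 0 → y.headD 0 = 0 → precLt x y ∨ precLt y x := by
    intro x y hx hy hxy h0 h0'
    rcases lt_trichotomy x.length y.length with h | h | h
    · exact Or.inl (Or.inr (Or.inl ⟨h0, h0', Or.inl h⟩))
    · rcases lex_total x y h hxy with hl | hl
      · exact Or.inl (Or.inr (Or.inl ⟨h0, h0', Or.inr ⟨h, hl⟩⟩))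
      · exact Or.inr (Or.inr (Or.inl ⟨h0', h0, Or.inr ⟨h.symm, hl⟩⟩))
    · exact Or.inr (Or.inr (Or.inl ⟨h0', h0, Or.inl h⟩))
  have hgt : ∀ x y : List ℕ, inD x → inD y → x ≠ y →
      x.headD 0 = 1 → y.headD 0 = 1 → precLt x y ∨ precLt y x := by
    intro x y hx hy hxy h1 h1'
    rcases lt_trichotomy x.length y.length with h | h | h
    · exact Or.inr (Or.inr (Or.inr ⟨h1', h1, Or.inl h⟩))
    · rcases lex_total x y h hxy with hl | hl
      · exact Or.inl (Or.inr (Or.inr ⟨h1, h1', Or.inr ⟨h, hl⟩⟩))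
      · exact Or.inr (Or.inr (Or.inr ⟨h1', h1, Or.inr ⟨h.symm, hl⟩⟩))
    · exact Or.inl (Or.inr (Or.inr ⟨h1, h1', Or.inl h⟩))
  rcases head01 hu with h0 | h1 <;> rcases head01 hv with h0' | h1'
  · exact hlt u v hu hv hne h0 h0'
  · exact Or.inr (Or.inl ⟨h1', h0⟩)
  · exact Or.inl (Or.inl ⟨h1, h0'⟩)
  · exact hgt u v hu hv hne h1 h1'

lemma odd_len_gap {u v : List ℕ} (hu : inD u) (hv : inD v)
    (h : u.length < v.length) : u.length + 2 ≤ v.length := by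
  obtain ⟨a, ha⟩ := hu.2.1
  obtain ⟨b, hb⟩ := hv.2.1
  omega

theorem valFc_mono {u v : List ℕ} (hu : inD u) (hv : inD v) (h : precLt u v) :
    valFc u < valFc v := by
  rcases h with ⟨h1, h0⟩ | ⟨h0, h0', hrad⟩ | ⟨h1, h1', hrev⟩
  · calc valFc u < 0 := valFc_neg hu h1
      _ ≤ valFc v := by rw [valFc_head0 h0]; positivity
  · rcases hrad with hlen | ⟨hlen, hlex⟩
    · have hgap := odd_len_gap hu hv hlen
      have hu1 : valF u < Nat.fib (u.length + 1) := valF_lt_head0 (inD_Zw hu) h0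
      have h3 : 3 ≤ v.length := by
        have : 1 ≤ u.length := by
          have := inD_ne_nil hu
          cases u with
          | nil => simp at this
          | cons a t => simp
        omega
      have hv1 : Nat.fib (v.length - 1) ≤ valF v := valF_lb_head0 hv h0' h3
      have hmono : Nat.fib (u.length + 1) ≤ Nat.fib (v.length - 1) :=
        Nat.fib_mono (by omega)
      rw [valFc_head0 h0, valFc_head0 h0']
      exact_mod_cast lt_of_lt_of_le hu1 (le_trans hmono hv1)
    · rw [valFc_head0 h0, valFc_head0 h0']
      exact_mod_cast valF_lex hlex (inD_Zw hu) (inD_Zw hv) hlen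
  · rcases hrev with hlen | ⟨hlen, hlex⟩
    · -- v shorter than u
      have hgap := odd_len_gap hv hu hlen
      have h3 : 3 ≤ u.length := by
        have : 1 ≤ v.length := by
          have := inD_ne_nil hv
          cases v with
          | nil => simp at this
          | cons a t => simp
        omega
      have hub := valFc_head1_ub hu h1 h3
      have hlb := valFc_head1_lb hv h1'
      have hmono : Nat.fib v.length ≤ Nat.fib (u.length - 2) :=
        Nat.fib_mono (by omega)
      have : (Nat.fib v.length : ℤ) ≤ (Nat.fib (u.length - 2) : ℤ) := by
        exact_mod_cast hmono
      omega
    · have hval : valF u < valF v := valF_lex hlex (inD_Zw hu) (inD_Zw hv) hlen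
      simp only [valFc, h1, h1', hlen]
      have : (valF u : ℤ) < (valF v : ℤ) := by exact_mod_cast hval
      omega


theorem valFc_increasing_bijection :
    Set.BijOn valFc {w : List ℕ | inD w} Set.univ ∧
    ∀ u ∈ {w : List ℕ | inD w}, ∀ v ∈ {w : List ℕ | inD w},
      precLt u v → valFc u < valFc v := by
  constructor
  · refine ⟨fun _ _ => trivial, ?_, ?_⟩
    · intro u hu v hv he
      by_contra hne
      rcases prec_total hu hv hne with h | h
      · exact absurd he (ne_of_lt (valFc_mono hu hv h))
      · exact absurd he (ne_of_gt (valFc_mono hv hu h))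
    · intro z _
      obtain ⟨w, hw, hval⟩ := surj_all z
      exact ⟨w, hw, hval⟩
  · intro u hu v hv h
    exact valFc_mono hu hv h
end
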